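/- Let x̄ ∈ Lip(□^d, ℝ^{d+n}) denote the parametrized map x̄(s) := (s, x(s)), let U ∈ O_{d,d+n} select the first d coordinates (so that J[x̄_U] ≡ 1 almost everywhere), and view each P ∈ O_{d,n} as the element of O_{d,d+n} selecting coordinates d+P(1),…,d+P(d) (so that J[x̄_P] = J[x_P] almost everywhere); set W := {U} ∪ O_{d,n} ⊆ O_{d,d+n}. If x, y ∈ Lip(□^d, ℝ^n) satisfy Φ_m^{P,π}(x̄) = Φ_m^{P,π}(ȳ) for every m ≥ 1, every P ∈ W^m, and every π ∈ Σ_m^d, then J[x_P](s) = J[y_P](s) for almost every s ∈ [0,1]^d and every P ∈ O_{d,n}; that is, x and y are Jacobian equivalent. -/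

import Mathlib

open MeasureTheory

open scoped Classical

noncomputable section

/-- The unit cube `[0,1]^d` as a subset of `Fin d → ℝ`. -/
def unitCube (d : ℕ) : Set (Fin d → ℝ) := Set.Icc 0 1

/-- Lipschitz condition with constant `L`, with respect to Euclidean norms. -/
def EuclidLip {d n : ℕ} (L : ℝ) (x : (Fin d → ℝ) → Fin n → ℝ) : Prop :=
  ∀ s t : Fin d → ℝ,
    Real.sqrt (∑ k, (x s k - x t k) ^ 2) ≤ L * Real.sqrt (∑ j, (s j - t j) ^ 2)

/-- Lipschitz map. -/
def IsLipMap {d n : ℕ} (x : (Fin d → ℝ) → Fin n → ℝ) : Prop :=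
  ∃ L : ℝ, EuclidLip L x

/-- The Jacobian minor `J[x_P](s)`: the determinant of the `d × d` matrix
with `(i,j)` entry `∂ x_{P i} / ∂ s_j (s)`. -/
def jacobianMinor {d n : ℕ} (x : (Fin d → ℝ) → Fin n → ℝ) (P : Fin d → Fin n)
    (s : Fin d → ℝ) : ℝ :=
  (Matrix.of fun i j : Fin d => fderiv ℝ (fun t => x t (P i)) s (Pi.single j 1)).det

/-- The permuted `m`-simplex `Δ^m_π(a,b)`. -/
def permSimplex {m : ℕ} (π : Equiv.Perm (Fin m)) (a b : ℝ) : Set (Fin m → ℝ) :=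
  {u | (∀ i, u i ∈ Set.Icc a b) ∧ StrictMono fun i => u (π i)}

/-- The integration domain `D^{m,d}_π(a,b) = Δ^m_{π 1}(a₁,b₁) × ⋯ × Δ^m_{π d}(a_d,b_d)`. -/
def intDomain {m d : ℕ} (π : Fin d → Equiv.Perm (Fin m)) (a b : Fin d → ℝ) :
    Set (Fin m → Fin d → ℝ) :=
  {t | ∀ j, (fun i => t i j) ∈ permSimplex (π j) (a j) (b j)}

/-- The restricted mapping space monomial `Φ_m^{P,π}(x)_{a,b}`. -/
def msMonomialOn {d n m : ℕ} (x : (Fin d → ℝ) → Fin n → ℝ)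
    (P : Fin m → Fin d → Fin n) (π : Fin d → Equiv.Perm (Fin m))
    (a b : Fin d → ℝ) : ℝ :=
  ∫ t in intDomain π a b, ∏ i, jacobianMinor x (P i) (t i)

/-- The mapping space monomial `Φ_m^{P,π}(x)`. -/
def msMonomial {d n m : ℕ} (x : (Fin d → ℝ) → Fin n → ℝ)
    (P : Fin m → Fin d → Fin n) (π : Fin d → Equiv.Perm (Fin m)) : ℝ :=
  msMonomialOn x P π (fun _ => 0) (fun _ => 1)

/-- The parametrized map `x̄(s) = (s, x(s))`. -/
def parametrize {d n : ℕ} (x : (Fin d → ℝ) → Fin n → ℝ) :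
    (Fin d → ℝ) → Fin (d + n) → ℝ :=
  fun s => Fin.append s (x s)

lemma measurable_jacobianMinor {d n : ℕ} (x : (Fin d → ℝ) → Fin n → ℝ) (P : Fin d → Fin n) :
    Measurable (jacobianMinor x P) := by
  unfold jacobianMinor
  simp only [Matrix.det_apply, Matrix.of_apply, Units.smul_def, zsmul_eq_mul]
  refine Finset.measurable_sum _ fun σ _ => Measurable.const_mul ?_ _
  exact Finset.measurable_prod _ fun i _ => measurable_fderiv_apply_const ℝ _ _

lemma euclidLip_coord_bound {d n : ℕ} {L : ℝ} {x : (Fin d → ℝ) → Fin n → ℝ}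
    (hx : EuclidLip L x) (k : Fin n) (s t : Fin d → ℝ) :
    ‖x t k - x s k‖ ≤ (|L| * Real.sqrt d) * ‖t - s‖ := by
  have h1 : ‖x t k - x s k‖ ≤ Real.sqrt (∑ k', (x t k' - x s k') ^ 2) := by
    rw [Real.norm_eq_abs, ← Real.sqrt_sq_eq_abs]
    apply Real.sqrt_le_sqrt
    exact Finset.single_le_sum (f := fun k' => (x t k' - x s k') ^ 2)
      (fun i _ => sq_nonneg _) (Finset.mem_univ k)
  have h2 : Real.sqrt (∑ k', (x t k' - x s k') ^ 2) ≤ L * Real.sqrt (∑ j, (t j - s j) ^ 2) :=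
    hx t s
  have h3 : Real.sqrt (∑ j, (t j - s j) ^ 2) ≤ Real.sqrt d * ‖t - s‖ := by
    have hsum : (∑ j, (t j - s j) ^ 2) ≤ (d : ℝ) * ‖t - s‖ ^ 2 := by
      calc (∑ j, (t j - s j) ^ 2) ≤ ∑ _j : Fin d, ‖t - s‖ ^ 2 := by
            apply Finset.sum_le_sum
            intro j _
            rw [← sq_abs]
            apply pow_le_pow_left₀ (abs_nonneg _)
            have := norm_le_pi_norm (t - s) j
            simpa using this
        _ = (d : ℝ) * ‖t - s‖ ^ 2 := by simp [Finset.sum_const, nsmul_eq_mul]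
    calc Real.sqrt (∑ j, (t j - s j) ^ 2) ≤ Real.sqrt ((d : ℝ) * ‖t - s‖ ^ 2) :=
          Real.sqrt_le_sqrt hsum
      _ = Real.sqrt d * ‖t - s‖ := by
          rw [Real.sqrt_mul (Nat.cast_nonneg d), Real.sqrt_sq (norm_nonneg _)]
  calc ‖x t k - x s k‖ ≤ L * Real.sqrt (∑ j, (t j - s j) ^ 2) := h1.trans h2
    _ ≤ |L| * Real.sqrt (∑ j, (t j - s j) ^ 2) :=
        mul_le_mul_of_nonneg_right (le_abs_self L) (Real.sqrt_nonneg _)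
    _ ≤ |L| * (Real.sqrt d * ‖t - s‖) := mul_le_mul_of_nonneg_left h3 (abs_nonneg _)
    _ = (|L| * Real.sqrt d) * ‖t - s‖ := by ring

lemma norm_fderiv_coord_le {d n : ℕ} {L : ℝ} {x : (Fin d → ℝ) → Fin n → ℝ}
    (hx : EuclidLip L x) (k : Fin n) (s : Fin d → ℝ) :
    ‖fderiv ℝ (fun t => x t k) s‖ ≤ |L| * Real.sqrt d := by
  apply norm_fderiv_le_of_lip' ℝ
    (mul_nonneg (abs_nonneg _) (Real.sqrt_nonneg _))
  exact Filter.Eventually.of_forall fun t => euclidLip_coord_bound hx k s t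

lemma abs_jacobianMinor_le {d n : ℕ} {L : ℝ} {x : (Fin d → ℝ) → Fin n → ℝ}
    (hx : EuclidLip L x) (P : Fin d → Fin n) (s : Fin d → ℝ) :
    |jacobianMinor x P s| ≤ (Nat.factorial d) * (|L| * Real.sqrt d) ^ d := by
  have hent : ∀ i j : Fin d,
      |(Matrix.of fun i j : Fin d => fderiv ℝ (fun t => x t (P i)) s (Pi.single j 1)) i j|
        ≤ |L| * Real.sqrt d := by
    intro i j
    have h1 : ‖fderiv ℝ (fun t => x t (P i)) s (Pi.single j 1)‖ ≤
        ‖fderiv ℝ (fun t => x t (P i)) s‖ * ‖(Pi.single j 1 : Fin d → ℝ)‖ :=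
      ContinuousLinearMap.le_opNorm _ _
    have h2 : ‖(Pi.single j 1 : Fin d → ℝ)‖ = 1 := by
      rw [Pi.norm_single]; exact norm_one
    rw [Matrix.of_apply, ← Real.norm_eq_abs]
    calc ‖fderiv ℝ (fun t => x t (P i)) s (Pi.single j 1)‖
        ≤ ‖fderiv ℝ (fun t => x t (P i)) s‖ * ‖(Pi.single j 1 : Fin d → ℝ)‖ := h1
      _ = ‖fderiv ℝ (fun t => x t (P i)) s‖ := by rw [h2, mul_one]
      _ ≤ |L| * Real.sqrt d := norm_fderiv_coord_le hx (P i) s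
  have := Matrix.det_le (abv := (AbsoluteValue.abs : AbsoluteValue ℝ ℝ)) hent
  simpa [jacobianMinor, Fintype.card_fin, nsmul_eq_mul] using this

lemma jacobianMinor_parametrize_natAdd {d n : ℕ} (z : (Fin d → ℝ) → Fin n → ℝ)
    (Q : Fin d → Fin n) :
    jacobianMinor (parametrize z) (fun j => Fin.natAdd d (Q j)) = jacobianMinor z Q := by
  unfold jacobianMinor parametrize
  simp only [Fin.append_right]

lemma jacobianMinor_parametrize_castAdd {d n : ℕ} (z : (Fin d → ℝ) → Fin n → ℝ)
    (s : Fin d → ℝ) :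
    jacobianMinor (parametrize z) (fun j : Fin d => Fin.castAdd n j) s = 1 := by
  unfold jacobianMinor parametrize
  simp only [Fin.append_left]
  have : (Matrix.of fun i j : Fin d => fderiv ℝ (fun t : Fin d → ℝ => t i) s (Pi.single j 1))
      = (1 : Matrix (Fin d) (Fin d) ℝ) := by
    ext i j
    rw [Matrix.of_apply,
      show (fun t : Fin d → ℝ => t i) = ⇑(ContinuousLinearMap.proj i :
        (Fin d → ℝ) →L[ℝ] ℝ) from rfl]
    rw [ContinuousLinearMap.fderiv]
    simp [ContinuousLinearMap.proj_apply, Pi.single_apply, Matrix.one_apply, eq_comm]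
  rw [this, Matrix.det_one]

def ES {N d : ℕ} (S : Fin d → Finset (Fin N)) : Set (Fin (N + 1) → Fin d → ℝ) :=
  {t | (∀ j, t 0 j ∈ Set.Icc (0:ℝ) 1) ∧
       ∀ i : Fin N, ∀ j, t i.succ j ∈
         (if i ∈ S j then Set.Ico (0:ℝ) (t 0 j) else Set.Icc (t 0 j) 1)}

lemma filter_lt_card {m : ℕ} (v : Fin m → ℝ) (σ : Equiv.Perm (Fin m))
    (hσ : StrictMono fun p => v (σ p)) (p : Fin m) :
    (Finset.univ.filter fun i => v i < v (σ p)).card = (p : ℕ) := by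
  have himg : (Finset.univ.filter fun i => v i < v (σ p))
      = (Finset.Iio p).map σ.toEmbedding := by
    ext i
    simp only [Finset.mem_filter, Finset.mem_univ, true_and, Finset.mem_map,
      Finset.mem_Iio, Equiv.coe_toEmbedding]
    constructor
    · intro hi
      refine ⟨σ.symm i, ?_, σ.apply_symm_apply i⟩
      have h := hσ.lt_iff_lt (a := σ.symm i) (b := p)
      rw [← h]
      simpa using hi
    · rintro ⟨q, hq, rfl⟩
      exact hσ hq
  rw [himg, Finset.card_map, Fin.card_Iio]

lemma filter_succ_card {N : ℕ} (Q : Fin (N + 1) → Prop) [DecidablePred Q] (hQ0 : ¬ Q 0) :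
    (Finset.univ.filter fun i : Fin (N + 1) => Q i).card
      = (Finset.univ.filter fun i : Fin N => Q i.succ).card := by
  have heq : (Finset.univ.filter fun i : Fin (N + 1) => Q i)
      = (Finset.univ.filter fun i : Fin N => Q i.succ).map
          ⟨Fin.succ, Fin.succ_injective N⟩ := by
    ext i
    simp only [Finset.mem_filter, Finset.mem_univ, true_and, Finset.mem_map,
      Function.Embedding.coeFn_mk]
    cases i using Fin.cases with
    | zero => simp [hQ0, (Fin.succ_ne_zero _)]
    | succ i' =>
      constructor
      · intro hi; exact ⟨i', hi, rfl⟩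
      · rintro ⟨q, hq, he⟩
        rwa [← Fin.succ_injective _ he]
  rw [heq, Finset.card_map]

lemma perm_eq_of_strictMono {m : ℕ} (v : Fin m → ℝ) (σ τ : Equiv.Perm (Fin m))
    (hσ : StrictMono fun p => v (σ p)) (hτ : StrictMono fun p => v (τ p)) : σ = τ := by
  have hinj : Function.Injective v := by
    intro a b hab
    have h1 : Function.Injective fun p => v (σ p) := hσ.injective
    have h2 := h1 (a₁ := σ.symm a) (a₂ := σ.symm b) (by simpa using hab)
    have := congrArg σ h2
    simpa using this
  haveI : WellFoundedLT (Fin m) := inferInstance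
  have hrange : (fun p => v (σ p)) = fun p => v (τ p) := by
    refine (StrictMono.range_inj hσ hτ).mp ?_
    have h1 : Set.range (fun p => v (σ p)) = Set.range v := σ.surjective.range_comp v
    have h2 : Set.range (fun p => v (τ p)) = Set.range v := τ.surjective.range_comp v
    rw [h1, h2]
  apply Equiv.ext
  intro p
  exact hinj (congrFun hrange p)

lemma intDomain_subset_ES {N d : ℕ} (k : Fin d → ℕ) (hk : ∀ j, k j < N + 1)
    (π : Fin d → Equiv.Perm (Fin (N + 1))) (hπ : ∀ j, π j ⟨k j, hk j⟩ = 0)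
    {t : Fin (N + 1) → Fin d → ℝ}
    (ht : t ∈ intDomain π (fun _ => 0) (fun _ => 1)) :
    ∃ S : Fin d → Finset (Fin N), (∀ j, (S j).card = k j) ∧ t ∈ ES S := by
  refine ⟨fun j => Finset.univ.filter (fun i => t i.succ j < t 0 j), fun j => ?_, ?_, ?_⟩
  · have hcard := filter_lt_card (fun i => t i j) (π j) (ht j).2 ⟨k j, hk j⟩
    rw [hπ j] at hcard
    rw [← filter_succ_card (fun i : Fin (N + 1) => t i j < t 0 j) (lt_irrefl _)]
    exact hcard
  · exact fun j => (ht j).1 0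
  · intro i j
    by_cases hij : t i.succ j < t 0 j
    · simp only [Finset.mem_filter, Finset.mem_univ, true_and, hij, if_pos]
      exact ⟨((ht j).1 i.succ).1, hij⟩
    · simp only [Finset.mem_filter, Finset.mem_univ, true_and, hij, if_neg, not_false_iff]
      exact ⟨not_lt.mp hij, ((ht j).1 i.succ).2⟩

lemma ES_subset_intDomain {N d : ℕ} (k : Fin d → ℕ) (hk : ∀ j, k j < N + 1)
    (S : Fin d → Finset (Fin N)) (hS : ∀ j, (S j).card = k j)
    {t : Fin (N + 1) → Fin d → ℝ} (ht : t ∈ ES S)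
    (hinj : ∀ j, Function.Injective fun i => t i j) :
    ∃ π : Fin d → Equiv.Perm (Fin (N + 1)),
      (∀ j, π j ⟨k j, hk j⟩ = 0) ∧ t ∈ intDomain π (fun _ => 0) (fun _ => 1) := by
  have hbd : ∀ j i, t i j ∈ Set.Icc (0:ℝ) 1 := by
    intro j i
    cases i using Fin.cases with
    | zero => exact ht.1 j
    | succ i' =>
      have h := ht.2 i' j
      by_cases hmem : i' ∈ S j
      · rw [if_pos hmem] at h
        exact ⟨h.1, h.2.le.trans (ht.1 j).2⟩
      · rw [if_neg hmem] at h
        exact ⟨(ht.1 j).1.trans h.1, h.2⟩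
  set σ : Fin d → Equiv.Perm (Fin (N + 1)) := fun j => Tuple.sort (fun i => t i j) with hσdef
  have hsm : ∀ j, StrictMono fun p => t (σ j p) j := by
    intro j
    have hmono : Monotone ((fun i => t i j) ∘ (σ j)) := Tuple.monotone_sort _
    have hi : Function.Injective ((fun i => t i j) ∘ (σ j)) :=
      (hinj j).comp (Equiv.injective _)
    exact hmono.strictMono_of_injective hi
  refine ⟨σ, fun j => ?_, fun j => ⟨fun i => hbd j i, hsm j⟩⟩
  -- position of 0
  have hfS : (Finset.univ.filter fun i : Fin N => t i.succ j < t 0 j) = S j := by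
    ext i
    simp only [Finset.mem_filter, Finset.mem_univ, true_and]
    constructor
    · intro hi
      by_contra hmem
      have h := ht.2 i j
      rw [if_neg hmem] at h
      exact absurd hi (not_lt.mpr h.1)
    · intro hmem
      have h := ht.2 i j
      rw [if_pos hmem] at h
      exact h.2
  have hcard : (Finset.univ.filter fun i : Fin (N + 1) => t i j < t 0 j).card = k j := by
    rw [filter_succ_card (fun i : Fin (N + 1) => t i j < t 0 j) (lt_irrefl _), hfS, hS j]
  have hpos := filter_lt_card (fun i => t i j) (σ j) (hsm j) ((σ j).symm 0)
  rw [Equiv.apply_symm_apply] at hpos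
  have : (σ j).symm 0 = ⟨k j, hk j⟩ := by
    apply Fin.ext
    rw [← hpos, hcard]
  rw [← this, Equiv.apply_symm_apply]

lemma intDomain_pairwise_disjoint {m d : ℕ} {π π' : Fin d → Equiv.Perm (Fin m)}
    (hne : π ≠ π') :
    Disjoint (intDomain π (fun _ => 0) (fun _ => (1:ℝ)))
      (intDomain π' (fun _ => 0) (fun _ => 1)) := by
  rw [Set.disjoint_left]
  intro t ht ht'
  apply hne
  funext j
  exact perm_eq_of_strictMono (fun i => t i j) _ _ (ht j).2 (ht' j).2

lemma ES_pairwise_disjoint {N d : ℕ} {S S' : Fin d → Finset (Fin N)} (hne : S ≠ S') :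
    Disjoint (ES S) (ES S') := by
  rw [Set.disjoint_left]
  intro t ht ht'
  apply hne
  funext j
  ext i
  have h1 := ht.2 i j
  have h2 := ht'.2 i j
  constructor
  · intro him
    rw [if_pos him] at h1
    by_contra him'
    rw [if_neg him'] at h2
    exact absurd h1.2 (not_lt.mpr h2.1)
  · intro him
    rw [if_pos him] at h2
    by_contra him'
    rw [if_neg him'] at h1
    exact absurd h2.2 (not_lt.mpr h1.1)

lemma measurableSet_permSimplex {m : ℕ} (σ : Equiv.Perm (Fin m)) (a b : ℝ) :
    MeasurableSet (permSimplex σ a b) := by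
  have heq : permSimplex σ a b =
      (⋂ i, {u : Fin m → ℝ | u i ∈ Set.Icc a b}) ∩
      ⋂ p, ⋂ q, {u : Fin m → ℝ | p < q → u (σ p) < u (σ q)} := by
    ext u
    simp only [permSimplex, Set.mem_inter_iff, Set.mem_iInter, Set.mem_setOf_eq]
    constructor
    · rintro ⟨h1, h2⟩
      exact ⟨h1, fun p q hpq => h2 hpq⟩
    · rintro ⟨h1, h2⟩
      exact ⟨h1, fun p q hpq => h2 p q hpq⟩
  rw [heq]
  apply MeasurableSet.inter
  · exact MeasurableSet.iInter fun i => (measurable_pi_apply i) measurableSet_Icc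
  · refine MeasurableSet.iInter fun p => MeasurableSet.iInter fun q => ?_
    by_cases hpq : p < q
    · have : {u : Fin m → ℝ | p < q → u (σ p) < u (σ q)}
          = {u : Fin m → ℝ | u (σ p) < u (σ q)} := by
        ext u; simp [hpq]
      rw [this]
      exact measurableSet_lt (measurable_pi_apply _) (measurable_pi_apply _)
    · have : {u : Fin m → ℝ | p < q → u (σ p) < u (σ q)} = Set.univ := by
        ext u; simp [hpq]
      rw [this]
      exact MeasurableSet.univ

lemma measurable_col {m d : ℕ} (j : Fin d) :
    Measurable (fun t : Fin m → Fin d → ℝ => fun i => t i j) :=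
  measurable_pi_lambda _ fun i => (measurable_pi_apply j).comp (measurable_pi_apply i)

lemma measurableSet_intDomain {m d : ℕ} (π : Fin d → Equiv.Perm (Fin m)) (a b : Fin d → ℝ) :
    MeasurableSet (intDomain π a b) := by
  have heq : intDomain π a b
      = ⋂ j, (fun t : Fin m → Fin d → ℝ => fun i => t i j) ⁻¹'
          permSimplex (π j) (a j) (b j) := by
    ext t; simp [intDomain, Set.mem_iInter]
  rw [heq]
  exact MeasurableSet.iInter fun j => (measurable_col j) (measurableSet_permSimplex _ _ _)

lemma measurableSet_ES {N d : ℕ} (S : Fin d → Finset (Fin N)) : MeasurableSet (ES S) := by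
  have heq : ES S =
      (⋂ j, {t : Fin (N + 1) → Fin d → ℝ | t 0 j ∈ Set.Icc (0:ℝ) 1}) ∩
      ⋂ i, ⋂ j, {t : Fin (N + 1) → Fin d → ℝ | t i.succ j ∈
        (if i ∈ S j then Set.Ico (0:ℝ) (t 0 j) else Set.Icc (t 0 j) 1)} := by
    ext t
    simp only [ES, Set.mem_inter_iff, Set.mem_iInter, Set.mem_setOf_eq]
  rw [heq]
  have hev : ∀ (i : Fin (N + 1)) (j : Fin d),
      Measurable fun t : Fin (N + 1) → Fin d → ℝ => t i j :=
    fun i j => (measurable_pi_apply j).comp (measurable_pi_apply i)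
  apply MeasurableSet.inter
  · exact MeasurableSet.iInter fun j => (hev 0 j) measurableSet_Icc
  · refine MeasurableSet.iInter fun i => MeasurableSet.iInter fun j => ?_
    by_cases hmem : i ∈ S j
    · simp only [if_pos hmem]
      have : {t : Fin (N + 1) → Fin d → ℝ | t i.succ j ∈ Set.Ico (0:ℝ) (t 0 j)}
          = {t : Fin (N + 1) → Fin d → ℝ | 0 ≤ t i.succ j} ∩
            {t | t i.succ j < t 0 j} := by
        ext t; simp [Set.mem_Ico]
      rw [this]
      exact ((measurableSet_le measurable_const (hev i.succ j)).inter
        (measurableSet_lt (hev i.succ j) (hev 0 j)))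
    · simp only [if_neg hmem]
      have : {t : Fin (N + 1) → Fin d → ℝ | t i.succ j ∈ Set.Icc (t 0 j) 1}
          = {t : Fin (N + 1) → Fin d → ℝ | t 0 j ≤ t i.succ j} ∩
            {t | t i.succ j ≤ 1} := by
        ext t; simp [Set.mem_Icc]
      rw [this]
      exact ((measurableSet_le (hev 0 j) (hev i.succ j)).inter
        (measurableSet_le (hev i.succ j) measurable_const))

lemma volume_bad_null {m d : ℕ} :
    volume {t : Fin m → Fin d → ℝ | ∃ j, ¬ Function.Injective fun i => t i j} = 0 := by
  have hsub : {t : Fin m → Fin d → ℝ | ∃ j, ¬ Function.Injective fun i => t i j}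
      ⊆ ⋃ j : Fin d, ⋃ p : Fin m × Fin m,
          {t : Fin m → Fin d → ℝ | p.1 ≠ p.2 ∧ t p.1 j = t p.2 j} := by
    intro t ⟨j, hj⟩
    rw [Function.not_injective_iff] at hj
    obtain ⟨a, b, hab, hne⟩ := hj
    exact Set.mem_iUnion.mpr ⟨j, Set.mem_iUnion.mpr ⟨(a, b), hne, hab⟩⟩
  apply measure_mono_null hsub
  apply measure_iUnion_null
  intro j
  apply measure_iUnion_null
  rintro ⟨a, b⟩
  by_cases hab : a = b
  · have : {t : Fin m → Fin d → ℝ | (a, b).1 ≠ (a, b).2 ∧ t (a, b).1 j = t (a, b).2 j}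
        = ∅ := by
      ext t; simp [hab]
    rw [this]; exact measure_empty
  · set p : Submodule ℝ (Fin m → Fin d → ℝ) :=
      { carrier := {t | t a j = t b j}
        add_mem' := by intro u v hu hv; simp only [Set.mem_setOf_eq, Pi.add_apply] at *
                       rw [hu, hv]
        zero_mem' := by simp
        smul_mem' := by intro c u hu; simp only [Set.mem_setOf_eq, Pi.smul_apply] at *
                        rw [hu] } with hp
    have hps : {t : Fin m → Fin d → ℝ | (a, b).1 ≠ (a, b).2 ∧ t (a, b).1 j = t (a, b).2 j}
        ⊆ (p : Set (Fin m → Fin d → ℝ)) := by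
      intro t ht; exact ht.2
    apply measure_mono_null hps
    apply Measure.addHaar_submodule
    intro htop
    have hmem : (Pi.single a (Pi.single j 1) : Fin m → Fin d → ℝ) ∈ p := by
      rw [htop]; trivial
    have : (Pi.single a (Pi.single j 1) : Fin m → Fin d → ℝ) a j
        = (Pi.single a (Pi.single j 1) : Fin m → Fin d → ℝ) b j := hmem
    rw [Pi.single_eq_same, Pi.single_eq_of_ne (Ne.symm hab)] at this
    simp at this

lemma mem_unitCube {d : ℕ} {s : Fin d → ℝ} :
    s ∈ unitCube d ↔ ∀ j, s j ∈ Set.Icc (0:ℝ) 1 := by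
  simp only [unitCube, Set.mem_Icc, Pi.le_def, Set.mem_Icc]
  constructor
  · rintro ⟨h1, h2⟩ j; exact ⟨h1 j, h2 j⟩
  · intro h; exact ⟨fun j => (h j).1, fun j => (h j).2⟩

lemma measurableSet_unitCube (d : ℕ) : MeasurableSet (unitCube d) :=
  measurableSet_Icc

/-- The product-form slice of `ES S` at first row `s`. -/
def sliceSet {N d : ℕ} (S : Fin d → Finset (Fin N)) (s : Fin d → ℝ) :
    Set (Fin N → Fin d → ℝ) :=
  Set.univ.pi fun i => Set.univ.pi fun j =>
    if i ∈ S j then Set.Ico (0:ℝ) (s j) else Set.Icc (s j) 1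

lemma cons_mem_ES_iff {N d : ℕ} (S : Fin d → Finset (Fin N)) (s : Fin d → ℝ)
    (r : Fin N → Fin d → ℝ) :
    Fin.cons s r ∈ ES S ↔ s ∈ unitCube d ∧ r ∈ sliceSet S s := by
  simp only [ES, Set.mem_setOf_eq, Fin.cons_zero, Fin.cons_succ, mem_unitCube,
    sliceSet, Set.mem_pi, Set.mem_univ, true_imp_iff]

lemma volume_sliceSet {N d : ℕ} (S : Fin d → Finset (Fin N)) {s : Fin d → ℝ}
    (hs : s ∈ unitCube d) :
    (volume (sliceSet S s)).toReal
      = ∏ i : Fin N, ∏ j : Fin d, (if i ∈ S j then s j else 1 - s j) := by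
  have h1 : volume (sliceSet S s) = ∏ i : Fin N, volume
      (Set.univ.pi fun j => if i ∈ S j then Set.Ico (0:ℝ) (s j) else Set.Icc (s j) 1) :=
    volume_pi_pi _
  have h2 : ∀ i : Fin N, volume
      (Set.univ.pi fun j => if i ∈ S j then Set.Ico (0:ℝ) (s j) else Set.Icc (s j) 1)
      = ∏ j : Fin d, ENNReal.ofReal (if i ∈ S j then s j else 1 - s j) := by
    intro i
    rw [volume_pi_pi]
    congr 1
    funext j
    by_cases hmem : i ∈ S j
    · simp [hmem, Real.volume_Ico]
    · simp [hmem, Real.volume_Icc]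
  rw [h1]
  simp_rw [h2]
  rw [ENNReal.toReal_prod]
  congr 1
  funext i
  rw [ENNReal.toReal_prod]
  congr 1
  funext j
  rw [ENNReal.toReal_ofReal]
  by_cases hmem : i ∈ S j
  · simp only [hmem, if_true]
    exact ((mem_unitCube.mp hs) j).1
  · simp only [hmem, if_false]
    have := ((mem_unitCube.mp hs) j).2
    linarith

lemma ES_subset_box {N d : ℕ} (S : Fin d → Finset (Fin N)) :
    ES S ⊆ Set.univ.pi fun _ : Fin (N + 1) =>
      Set.univ.pi fun _ : Fin d => Set.Icc (0:ℝ) 1 := by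
  intro t ht
  rw [Set.mem_pi]
  intro i _
  rw [Set.mem_pi]
  intro j _
  cases i using Fin.cases with
  | zero => exact ht.1 j
  | succ i' =>
    have h := ht.2 i' j
    by_cases hmem : i' ∈ S j
    · rw [if_pos hmem] at h
      exact ⟨h.1, h.2.le.trans (ht.1 j).2⟩
    · rw [if_neg hmem] at h
      exact ⟨(ht.1 j).1.trans h.1, h.2⟩

lemma volume_ES_lt_top {N d : ℕ} (S : Fin d → Finset (Fin N)) :
    volume (ES S) < ⊤ := by
  apply lt_of_le_of_lt (measure_mono (ES_subset_box S))
  have : volume (Set.univ.pi fun _ : Fin (N + 1) =>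
      Set.univ.pi fun _ : Fin d => Set.Icc (0:ℝ) 1) = 1 := by
    have hin : volume (Set.univ.pi fun _ : Fin d => Set.Icc (0:ℝ) 1) = 1 := by
      rw [volume_pi_pi]
      simp [Real.volume_Icc]
    rw [volume_pi_pi]
    simp only [hin, Finset.prod_const_one]
  rw [this]
  exact ENNReal.one_lt_top

lemma integral_ES {N d : ℕ} (S : Fin d → Finset (Fin N)) (g : (Fin d → ℝ) → ℝ)
    (hg : Measurable g) (C : ℝ) (hC : ∀ s, |g s| ≤ C) :
    ∫ t in ES S, g (t 0)
      = ∫ s in unitCube d,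
          g s * ∏ i : Fin N, ∏ j : Fin d, (if i ∈ S j then s j else 1 - s j) := by
  set F : (Fin (N + 1) → Fin d → ℝ) → ℝ := (ES S).indicator (fun t => g (t 0)) with hF
  have hmeasF : Measurable F :=
    (hg.comp (measurable_pi_apply 0)).indicator (measurableSet_ES S)
  have hintF : Integrable F := by
    rw [hF, integrable_indicator_iff (measurableSet_ES S)]
    haveI : IsFiniteMeasure (volume.restrict (ES S)) := by
      constructor
      rw [Measure.restrict_apply_univ]
      exact volume_ES_lt_top S
    refine Integrable.mono' (integrable_const C) ?_ ?_
    · exact ((hg.comp (measurable_pi_apply 0)).aestronglyMeasurable)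
    · exact Filter.Eventually.of_forall fun t => by simpa using hC (t 0)
  have hmp := MeasureTheory.volume_preserving_piFinSuccAbove
    (fun _ : Fin (N + 1) => Fin d → ℝ) 0
  have hsymm : ∀ (s : Fin d → ℝ) (r : Fin N → Fin d → ℝ),
      (MeasurableEquiv.piFinSuccAbove (fun _ : Fin (N + 1) => Fin d → ℝ) 0).symm (s, r)
        = Fin.cons s r := by
    intro s r
    simp only [MeasurableEquiv.piFinSuccAbove, MeasurableEquiv.symm_mk,
      MeasurableEquiv.coe_mk, Equiv.symm_symm, Fin.insertNthEquiv_zero]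
    rfl
  have step1 : ∫ t in ES S, g (t 0) = ∫ t, F t := by
    rw [hF, integral_indicator (measurableSet_ES S)]
  have step2 : ∫ t, F t
      = ∫ p : (Fin d → ℝ) × (Fin N → Fin d → ℝ),
          F ((MeasurableEquiv.piFinSuccAbove (fun _ : Fin (N + 1) => Fin d → ℝ) 0).symm p) := by
    exact (MeasurePreserving.integral_comp' (MeasurePreserving.symm _ hmp) F).symm
  have hint2 : Integrable (fun p : (Fin d → ℝ) × (Fin N → Fin d → ℝ) =>
      F ((MeasurableEquiv.piFinSuccAbove (fun _ : Fin (N + 1) => Fin d → ℝ) 0).symm p)) := by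
    exact ((MeasurePreserving.symm _ hmp).integrable_comp hintF.aestronglyMeasurable).mpr hintF
  have step3 : ∫ p : (Fin d → ℝ) × (Fin N → Fin d → ℝ),
      F ((MeasurableEquiv.piFinSuccAbove (fun _ : Fin (N + 1) => Fin d → ℝ) 0).symm p)
      = ∫ s : Fin d → ℝ, ∫ r : Fin N → Fin d → ℝ,
          F ((MeasurableEquiv.piFinSuccAbove (fun _ : Fin (N + 1) => Fin d → ℝ) 0).symm (s, r)) := by
    rw [Measure.volume_eq_prod] at hint2 ⊢
    exact integral_prod _ hint2
  have step4 : ∀ s : Fin d → ℝ,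
      (∫ r : Fin N → Fin d → ℝ,
        F ((MeasurableEquiv.piFinSuccAbove (fun _ : Fin (N + 1) => Fin d → ℝ) 0).symm (s, r)))
      = (unitCube d).indicator
          (fun s' => g s' * (volume (sliceSet S s')).toReal) s := by
    intro s
    by_cases hs : s ∈ unitCube d
    · have heq : ∀ r : Fin N → Fin d → ℝ,
          F ((MeasurableEquiv.piFinSuccAbove (fun _ : Fin (N + 1) => Fin d → ℝ) 0).symm (s, r))
            = (sliceSet S s).indicator (fun _ => g s) r := by
        intro r
        rw [hsymm s r, hF]
        by_cases hr : r ∈ sliceSet S s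
        · rw [Set.indicator_of_mem ((cons_mem_ES_iff S s r).mpr ⟨hs, hr⟩),
            Set.indicator_of_mem hr, Fin.cons_zero]
        · rw [Set.indicator_of_notMem (fun hmem => hr ((cons_mem_ES_iff S s r).mp hmem).2),
            Set.indicator_of_notMem hr]
      rw [Set.indicator_of_mem hs]
      simp_rw [heq]
      have hms : MeasurableSet (sliceSet S s) := by
        apply MeasurableSet.univ_pi
        intro i
        apply MeasurableSet.univ_pi
        intro j
        by_cases hmem : i ∈ S j
        · simp [hmem, measurableSet_Ico]
        · simp [hmem, measurableSet_Icc]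
      rw [integral_indicator_const _ hms]
      rw [smul_eq_mul, mul_comm]
      rfl
    · have heq : ∀ r : Fin N → Fin d → ℝ,
          F ((MeasurableEquiv.piFinSuccAbove (fun _ : Fin (N + 1) => Fin d → ℝ) 0).symm (s, r))
            = 0 := by
        intro r
        rw [hsymm s r, hF]
        exact Set.indicator_of_notMem
          (fun hmem => hs ((cons_mem_ES_iff S s r).mp hmem).1) _
      simp_rw [heq]
      rw [Set.indicator_of_notMem hs]
      exact integral_zero _ _
  have step5 : ∫ s : Fin d → ℝ, (unitCube d).indicator
      (fun s' => g s' * (volume (sliceSet S s')).toReal) s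
      = ∫ s in unitCube d, g s * (volume (sliceSet S s)).toReal :=
    integral_indicator (measurableSet_unitCube d)
  rw [step1, step2, step3]
  simp_rw [step4]
  rw [step5]
  apply setIntegral_congr_fun (measurableSet_unitCube d)
  intro s hs
  dsimp only
  rw [volume_sliceSet S hs]

lemma unitCube_eq_pi (d : ℕ) :
    unitCube d = Set.univ.pi fun _ : Fin d => Set.Icc (0:ℝ) 1 := by
  ext s
  rw [mem_unitCube, Set.mem_pi]
  simp

lemma volume_unitCube (d : ℕ) : volume (unitCube d) = 1 := by
  rw [unitCube_eq_pi, volume_pi_pi]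
  simp [Real.volume_Icc]

lemma isCompact_unitCube (d : ℕ) : IsCompact (unitCube d) := isCompact_Icc

lemma integrableOn_cube_mul {d : ℕ} (g : (Fin d → ℝ) → ℝ) (hg : Measurable g)
    (C : ℝ) (hC : ∀ s, |g s| ≤ C) (p : (Fin d → ℝ) → ℝ) (hp : Continuous p) :
    IntegrableOn (fun s => g s * p s) (unitCube d) := by
  have hpint : IntegrableOn p (unitCube d) :=
    hp.continuousOn.integrableOn_compact (isCompact_unitCube d)
  exact Integrable.bdd_mul (c := C) hpint hg.aestronglyMeasurable.restrict
    (Filter.Eventually.of_forall fun s => by simpa using hC s)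

/-- expansion of a monomial in Bernstein-type terms -/
lemma monomial_expand {N : ℕ} (a : ℕ) (ha : a ≤ N) (u : ℝ) :
    u ^ a = ∑ i ∈ Finset.range (N - a + 1),
      (Nat.choose (N - a) i : ℝ) * (u ^ (a + i) * (1 - u) ^ (N - (a + i))) := by
  have hb := add_pow u (1 - u) (N - a)
  rw [show u + (1 - u) = 1 by ring, one_pow] at hb
  calc u ^ a = u ^ a * 1 := (mul_one _).symm
    _ = u ^ a * ∑ i ∈ Finset.range (N - a + 1),
        u ^ i * (1 - u) ^ (N - a - i) * (Nat.choose (N - a) i : ℝ) := by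
        exact congrArg (fun z => u ^ a * z) hb
    _ = _ := by
        rw [Finset.mul_sum]
        apply Finset.sum_congr rfl
        intro i hi
        rw [Finset.mem_range] at hi
        have h1 : a + i ≤ N := by omega
        have h2 : N - a - i = N - (a + i) := by omega
        rw [h2, pow_add]
        ring

lemma mono_moments_eq {d : ℕ} (g₁ g₂ : (Fin d → ℝ) → ℝ)
    (hg₁ : Measurable g₁) (hg₂ : Measurable g₂)
    (C : ℝ) (hC₁ : ∀ s, |g₁ s| ≤ C) (hC₂ : ∀ s, |g₂ s| ≤ C)
    (hyp : ∀ (N : ℕ) (k : Fin d → ℕ), (∀ j, k j < N + 1) →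
      ∫ s in unitCube d, g₁ s * ∏ j, (s j) ^ (k j) * (1 - s j) ^ (N - k j)
        = ∫ s in unitCube d, g₂ s * ∏ j, (s j) ^ (k j) * (1 - s j) ^ (N - k j))
    (c : Fin d → ℕ) :
    ∫ s in unitCube d, g₁ s * ∏ j, (s j) ^ (c j)
      = ∫ s in unitCube d, g₂ s * ∏ j, (s j) ^ (c j) := by
  set N : ℕ := Finset.univ.sup c with hN
  have hcN : ∀ j, c j ≤ N := fun j => Finset.le_sup (Finset.mem_univ j)
  -- pointwise expansion
  have hpt : ∀ s : Fin d → ℝ, (∏ j, (s j) ^ (c j))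
      = ∑ I ∈ Fintype.piFinset (fun j : Fin d => Finset.range (N - c j + 1)),
          ∏ j, ((Nat.choose (N - c j) (I j) : ℝ) *
            ((s j) ^ (c j + I j) * (1 - s j) ^ (N - (c j + I j)))) := by
    intro s
    have hf := Finset.prod_univ_sum (fun j : Fin d => Finset.range (N - c j + 1))
      (fun (j : Fin d) (i : ℕ) => (Nat.choose (N - c j) i : ℝ) *
        ((s j) ^ (c j + i) * (1 - s j) ^ (N - (c j + i))))
    rw [← hf]
    apply Finset.prod_congr rfl
    intro j _
    exact monomial_expand (c j) (hcN j) (s j)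
  have key : ∀ (g : (Fin d → ℝ) → ℝ), Measurable g → (∀ s, |g s| ≤ C) →
      ∫ s in unitCube d, g s * ∏ j, (s j) ^ (c j)
        = ∑ I ∈ Fintype.piFinset (fun j : Fin d => Finset.range (N - c j + 1)),
            (∏ j, (Nat.choose (N - c j) (I j) : ℝ)) *
            ∫ s in unitCube d, g s * ∏ j, ((s j) ^ (c j + I j) *
              (1 - s j) ^ (N - (c j + I j))) := by
    intro g hg hCg
    have step1 : ∫ s in unitCube d, g s * ∏ j, (s j) ^ (c j)
        = ∫ s in unitCube d, ∑ I ∈ Fintype.piFinset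
            (fun j : Fin d => Finset.range (N - c j + 1)),
            (∏ j, (Nat.choose (N - c j) (I j) : ℝ)) *
              (g s * ∏ j, ((s j) ^ (c j + I j) * (1 - s j) ^ (N - (c j + I j)))) := by
      apply setIntegral_congr_fun (measurableSet_unitCube d)
      intro s _
      dsimp only
      rw [hpt s, Finset.mul_sum]
      apply Finset.sum_congr rfl
      intro I _
      rw [Finset.prod_mul_distrib]
      ring
    rw [step1, integral_finset_sum]
    · apply Finset.sum_congr rfl
      intro I _
      rw [integral_const_mul]
    · intro I _
      apply Integrable.const_mul
      apply integrableOn_cube_mul g hg C hCg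
      exact continuous_finset_prod _ fun j _ =>
        ((continuous_apply j).pow _).mul ((continuous_const.sub (continuous_apply j)).pow _)
  rw [key g₁ hg₁ hC₁, key g₂ hg₂ hC₂]
  apply Finset.sum_congr rfl
  intro I hI
  congr 1
  have hIlt : ∀ j, c j + I j < N + 1 := by
    intro j
    rw [Fintype.mem_piFinset] at hI
    have h1 := hI j
    rw [Finset.mem_range] at h1
    have h2 := hcN j
    omega
  have := hyp N (fun j => c j + I j) hIlt
  simpa using this

-- axioms standing for already-proved lemmas
lemma intDomain_subset_box {N d : ℕ} (π : Fin d → Equiv.Perm (Fin (N + 1))) :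
    intDomain π (fun _ => 0) (fun _ => (1:ℝ)) ⊆
      Set.univ.pi fun _ : Fin (N + 1) => Set.univ.pi fun _ : Fin d => Set.Icc (0:ℝ) 1 := by
  intro t ht
  rw [Set.mem_pi]
  intro i _
  rw [Set.mem_pi]
  intro j _
  exact (ht j).1 i

lemma volume_box {N d : ℕ} :
    volume (Set.univ.pi fun _ : Fin (N + 1) =>
      Set.univ.pi fun _ : Fin d => Set.Icc (0:ℝ) 1) = 1 := by
  have hin : volume (Set.univ.pi fun _ : Fin d => Set.Icc (0:ℝ) 1) = 1 := by
    rw [volume_pi_pi]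
    simp [Real.volume_Icc]
  rw [volume_pi_pi]
  simp only [hin, Finset.prod_const_one]

lemma integrableOn_row0 {N d : ℕ} (g : (Fin d → ℝ) → ℝ) (hg : Measurable g)
    (C : ℝ) (hC : ∀ s, |g s| ≤ C) (A : Set (Fin (N + 1) → Fin d → ℝ))
    (hA : MeasurableSet A) (hAv : volume A < ⊤) :
    IntegrableOn (fun t => g (t 0)) A := by
  haveI : IsFiniteMeasure (volume.restrict A) := by
    constructor
    rw [Measure.restrict_apply_univ]
    exact hAv
  refine Integrable.mono' (integrable_const C) ?_ ?_
  · exact (hg.comp (measurable_pi_apply 0)).aestronglyMeasurable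
  · exact Filter.Eventually.of_forall fun t => by simpa using hC (t 0)

lemma prod_ite_pow {N d : ℕ} (S : Fin d → Finset (Fin N)) (s : Fin d → ℝ) :
    (∏ i : Fin N, ∏ j : Fin d, (if i ∈ S j then s j else 1 - s j))
      = ∏ j : Fin d, (s j) ^ (S j).card * (1 - s j) ^ (N - (S j).card) := by
  rw [Finset.prod_comm]
  apply Finset.prod_congr rfl
  intro j _
  rw [Finset.prod_ite]
  simp only [Finset.prod_const]
  have h1 : Finset.univ.filter (fun i : Fin N => i ∈ S j) = S j := by ext i; simp
  have h2 : (Finset.univ.filter (fun i : Fin N => ¬ i ∈ S j)).card = N - (S j).card := by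
    rw [Finset.filter_not, h1, Finset.card_sdiff_of_subset (Finset.subset_univ _)]
    simp
  rw [h1, h2]

/-- The key moment identity. -/
lemma moments_eq {d : ℕ} (N : ℕ) (k : Fin d → ℕ) (hk : ∀ j, k j < N + 1)
    (g₁ g₂ : (Fin d → ℝ) → ℝ) (hg₁ : Measurable g₁) (hg₂ : Measurable g₂)
    (C : ℝ) (hC₁ : ∀ s, |g₁ s| ≤ C) (hC₂ : ∀ s, |g₂ s| ≤ C)
    (heq : ∀ π : Fin d → Equiv.Perm (Fin (N + 1)),
      (∀ j, π j ⟨k j, hk j⟩ = 0) →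
      ∫ t in intDomain π (fun _ => 0) (fun _ => 1), g₁ (t 0)
        = ∫ t in intDomain π (fun _ => 0) (fun _ => 1), g₂ (t 0)) :
    ∫ s in unitCube d, g₁ s * ∏ j, (s j) ^ (k j) * (1 - s j) ^ (N - k j)
      = ∫ s in unitCube d, g₂ s * ∏ j, (s j) ^ (k j) * (1 - s j) ^ (N - k j) := by
  set F : Finset (Fin d → Equiv.Perm (Fin (N + 1))) :=
    Finset.univ.filter (fun π => ∀ j, π j ⟨k j, hk j⟩ = 0) with hFdef
  set 𝒮 : Finset (Fin d → Finset (Fin N)) :=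
    Finset.univ.filter (fun S => ∀ j, (S j).card = k j) with hSdef
  -- the two unions agree a.e.
  have hae : (⋃ π ∈ F, intDomain π (fun _ => 0) (fun _ => (1:ℝ)))
      =ᵐ[volume] (⋃ S ∈ 𝒮, ES S) := by
    rw [Filter.eventuallyEq_set]
    have hbad := volume_bad_null (m := N + 1) (d := d)
    rw [← compl_mem_ae_iff] at hbad
    filter_upwards [hbad] with t ht
    have hinj : ∀ j, Function.Injective fun i => t i j := by
      by_contra hcon
      push_neg at hcon
      exact ht (by simpa using hcon)
    constructor
    · intro hmem
      rw [Set.mem_iUnion] at hmem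
      obtain ⟨π, hπ⟩ := hmem
      rw [Set.mem_iUnion] at hπ
      obtain ⟨hπF, hπt⟩ := hπ
      rw [hFdef, Finset.mem_filter] at hπF
      obtain ⟨S, hScard, hSt⟩ := intDomain_subset_ES k hk π hπF.2 hπt
      rw [Set.mem_iUnion]
      refine ⟨S, ?_⟩
      rw [Set.mem_iUnion]
      exact ⟨by rw [hSdef, Finset.mem_filter]; exact ⟨Finset.mem_univ _, hScard⟩, hSt⟩
    · intro hmem
      rw [Set.mem_iUnion] at hmem
      obtain ⟨S, hS⟩ := hmem
      rw [Set.mem_iUnion] at hS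
      obtain ⟨hSF, hSt⟩ := hS
      rw [hSdef, Finset.mem_filter] at hSF
      obtain ⟨π, hπ0, hπt⟩ := ES_subset_intDomain k hk S hSF.2 hSt hinj
      rw [Set.mem_iUnion]
      refine ⟨π, ?_⟩
      rw [Set.mem_iUnion]
      exact ⟨by rw [hFdef, Finset.mem_filter]; exact ⟨Finset.mem_univ _, hπ0⟩, hπt⟩
  -- sum over F equals sum over 𝒮
  have key : ∀ (g : (Fin d → ℝ) → ℝ), Measurable g → (∀ s, |g s| ≤ C) →
      ∑ π ∈ F, (∫ t in intDomain π (fun _ => 0) (fun _ => 1), g (t 0))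
        = (𝒮.card : ℝ) * ∫ s in unitCube d,
            g s * ∏ j, (s j) ^ (k j) * (1 - s j) ^ (N - k j) := by
    intro g hg hCg
    have hvolU : volume (⋃ π ∈ F, intDomain π (fun _ => 0) (fun _ => (1:ℝ))) < ⊤ := by
      apply lt_of_le_of_lt (measure_mono ?_) (by rw [volume_box]; exact ENNReal.one_lt_top :
        volume (Set.univ.pi fun _ : Fin (N + 1) =>
          Set.univ.pi fun _ : Fin d => Set.Icc (0:ℝ) 1) < ⊤)
      exact Set.iUnion₂_subset fun π _ => intDomain_subset_box π
    have h1 : ∑ π ∈ F, (∫ t in intDomain π (fun _ => 0) (fun _ => 1), g (t 0))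
        = ∫ t in ⋃ π ∈ F, intDomain π (fun _ => 0) (fun _ => 1), g (t 0) := by
      symm
      apply integral_biUnion_finset F (fun π _ => measurableSet_intDomain π _ _)
      · intro π _ π' _ hne
        exact intDomain_pairwise_disjoint hne
      · intro π _
        apply integrableOn_row0 g hg C hCg _ (measurableSet_intDomain π _ _)
        apply lt_of_le_of_lt (measure_mono (intDomain_subset_box π))
        rw [volume_box]
        exact ENNReal.one_lt_top
    have h2 : ∫ t in ⋃ π ∈ F, intDomain π (fun _ => 0) (fun _ => 1), g (t 0)
        = ∫ t in ⋃ S ∈ 𝒮, ES S, g (t 0) := setIntegral_congr_set hae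
    have hvolU2 : volume (⋃ S ∈ 𝒮, ES S) < ⊤ := by
      rw [← measure_congr hae]
      exact hvolU
    have h3 : ∫ t in ⋃ S ∈ 𝒮, ES S, g (t 0)
        = ∑ S ∈ 𝒮, ∫ t in ES S, g (t 0) := by
      apply integral_biUnion_finset 𝒮 (fun S _ => measurableSet_ES S)
      · intro S _ S' _ hne
        exact ES_pairwise_disjoint hne
      · intro S _
        exact integrableOn_row0 g hg C hCg _ (measurableSet_ES S) (volume_ES_lt_top S)
    have h4 : ∀ S ∈ 𝒮, ∫ t in ES S, g (t 0)
        = ∫ s in unitCube d, g s * ∏ j, (s j) ^ (k j) * (1 - s j) ^ (N - k j) := by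
      intro S hS
      rw [hSdef, Finset.mem_filter] at hS
      rw [integral_ES S g hg C hCg]
      apply setIntegral_congr_fun (measurableSet_unitCube d)
      intro s _
      dsimp only
      rw [prod_ite_pow]
      congr 1
      apply Finset.prod_congr rfl
      intro j _
      rw [hS.2 j]
    rw [h1, h2, h3, Finset.sum_congr rfl h4, Finset.sum_const, nsmul_eq_mul]
  -- 𝒮 is nonempty
  have hScard : (𝒮.card : ℝ) ≠ 0 := by
    have hne : 𝒮.Nonempty := by
      have hchoice : ∀ j : Fin d, ∃ T : Finset (Fin N), T ⊆ Finset.univ ∧ T.card = k j := by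
        intro j
        apply Finset.exists_subset_card_eq
        simpa using Nat.lt_succ_iff.mp (hk j)
      refine ⟨fun j => (hchoice j).choose, ?_⟩
      rw [hSdef, Finset.mem_filter]
      exact ⟨Finset.mem_univ _, fun j => (hchoice j).choose_spec.2⟩
    simpa using Finset.card_ne_zero_of_mem hne.choose_spec
  -- conclude
  have hsum : ∑ π ∈ F, (∫ t in intDomain π (fun _ => 0) (fun _ => 1), g₁ (t 0))
      = ∑ π ∈ F, (∫ t in intDomain π (fun _ => 0) (fun _ => 1), g₂ (t 0)) := by
    apply Finset.sum_congr rfl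
    intro π hπ
    rw [hFdef, Finset.mem_filter] at hπ
    exact heq π hπ.2
  have e1 := key g₁ hg₁ hC₁
  have e2 := key g₂ hg₂ hC₂
  rw [e1, e2] at hsum
  exact mul_left_cancel₀ hScard hsum

lemma integral_poly_zero {d : ℕ} (f : (Fin d → ℝ) → ℝ) (hf : Measurable f)
    (C : ℝ) (hC : ∀ s, |f s| ≤ C)
    (hmom : ∀ c : Fin d → ℕ, ∫ s in unitCube d, f s * ∏ j, (s j) ^ (c j) = 0)
    (p : MvPolynomial (Fin d) ℝ) :
    ∫ s in unitCube d, f s * MvPolynomial.eval s p = 0 := by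
  have step : ∫ s in unitCube d, f s * MvPolynomial.eval s p
      = ∑ v ∈ p.support, MvPolynomial.coeff v p *
          ∫ s in unitCube d, f s * ∏ j, (s j) ^ (v j) := by
    have hfun : (fun s : Fin d → ℝ => f s * MvPolynomial.eval s p)
        = fun s => ∑ v ∈ p.support,
            MvPolynomial.coeff v p * (f s * ∏ j, (s j) ^ (v j)) := by
      funext s
      rw [MvPolynomial.eval_eq' s p, Finset.mul_sum]
      apply Finset.sum_congr rfl
      intro v _
      ring
    rw [hfun, integral_finset_sum]
    · apply Finset.sum_congr rfl
      intro v _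
      rw [integral_const_mul]
    · intro v _
      apply Integrable.const_mul
      apply integrableOn_cube_mul f hf C hC
      exact continuous_finset_prod _ fun j _ => (continuous_apply j).pow _
  rw [step]
  apply Finset.sum_eq_zero
  intro v _
  rw [hmom (fun j => v j), mul_zero]

lemma integral_continuous_zero {d : ℕ} (f : (Fin d → ℝ) → ℝ) (hf : Measurable f)
    (C : ℝ) (hC : ∀ s, |f s| ≤ C)
    (hmom : ∀ c : Fin d → ℕ, ∫ s in unitCube d, f s * ∏ j, (s j) ^ (c j) = 0)
    (φ : (Fin d → ℝ) → ℝ) (hφ : Continuous φ) :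
    ∫ s in unitCube d, f s * φ s = 0 := by
  have hC0 : 0 ≤ C := le_trans (abs_nonneg _) (hC 0)
  haveI : CompactSpace (unitCube d) := isCompact_iff_compactSpace.mp (isCompact_unitCube d)
  set coord : Fin d → C(unitCube d, ℝ) :=
    fun j => ⟨fun z => (z : Fin d → ℝ) j,
      (continuous_apply j).comp continuous_subtype_val⟩ with hcoord
  set A : Subalgebra ℝ C(unitCube d, ℝ) := Algebra.adjoin ℝ (Set.range coord) with hA
  have hsep : A.SeparatesPoints := by
    intro z w hzw
    have hne : (z : Fin d → ℝ) ≠ (w : Fin d → ℝ) := fun hcon => hzw (Subtype.ext hcon)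
    obtain ⟨j, hj⟩ := Function.ne_iff.mp hne
    exact ⟨⇑(coord j), ⟨coord j, Algebra.subset_adjoin (Set.mem_range_self j), rfl⟩, hj⟩
  have hdense := ContinuousMap.subalgebra_topologicalClosure_eq_top_of_separatesPoints A hsep
  have hrep : ∀ a ∈ A, ∃ p : MvPolynomial (Fin d) ℝ,
      ∀ z : unitCube d, a z = MvPolynomial.eval (z : Fin d → ℝ) p := by
    intro a ha
    induction ha using Algebra.adjoin_induction with
    | mem a ha =>
      obtain ⟨j, rfl⟩ := ha
      exact ⟨MvPolynomial.X j, fun z => by simp [hcoord]⟩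
    | algebraMap r =>
      refine ⟨MvPolynomial.C r, fun z => ?_⟩
      simp
    | add a b _ _ iha ihb =>
      obtain ⟨p, hp⟩ := iha
      obtain ⟨q, hq⟩ := ihb
      exact ⟨p + q, fun z => by simp [hp z, hq z]⟩
    | mul a b _ _ iha ihb =>
      obtain ⟨p, hp⟩ := iha
      obtain ⟨q, hq⟩ := ihb
      exact ⟨p * q, fun z => by simp [hp z, hq z]⟩
  set φX : C(unitCube d, ℝ) :=
    ⟨fun z => φ (z : Fin d → ℝ), hφ.comp continuous_subtype_val⟩ with hφX
  have hclosure : φX ∈ closure (A : Set C(unitCube d, ℝ)) := by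
    have : φX ∈ A.topologicalClosure := by rw [hdense]; trivial
    exact this
  have habs : ∀ ε : ℝ, 0 < ε → |∫ s in unitCube d, f s * φ s| ≤ C * ε := by
    intro ε hε
    obtain ⟨a, haA, hdist⟩ := Metric.mem_closure_iff.mp hclosure ε hε
    obtain ⟨p, hp⟩ := hrep a haA
    have hzero := integral_poly_zero f hf C hC hmom p
    have hqcont : Continuous fun s : Fin d → ℝ => MvPolynomial.eval s p :=
      MvPolynomial.continuous_eval p
    have hsplit : ∫ s in unitCube d, f s * φ s
        = (∫ s in unitCube d, f s * (φ s - MvPolynomial.eval s p))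
          + ∫ s in unitCube d, f s * MvPolynomial.eval s p := by
      have hi1 : Integrable (fun s => f s * (φ s - MvPolynomial.eval s p))
          (volume.restrict (unitCube d)) :=
        integrableOn_cube_mul f hf C hC (fun s => φ s - MvPolynomial.eval s p) (hφ.sub hqcont)
      have hi2 : Integrable (fun s => f s * MvPolynomial.eval s p)
          (volume.restrict (unitCube d)) :=
        integrableOn_cube_mul f hf C hC (fun s => MvPolynomial.eval s p) hqcont
      rw [← integral_add hi1 hi2]
      apply setIntegral_congr_fun (measurableSet_unitCube d)
      intro s _
      dsimp only
      ring
    rw [hsplit, hzero, add_zero]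
    have hb : ∀ s ∈ unitCube d, ‖f s * (φ s - MvPolynomial.eval s p)‖ ≤ C * ε := by
      intro s hs
      have h1 : |φ s - MvPolynomial.eval s p| ≤ ε := by
        have h2 := ContinuousMap.dist_apply_le_dist (f := φX) (g := a) ⟨s, hs⟩
        rw [hp ⟨s, hs⟩] at h2
        have h3 : dist (φX ⟨s, hs⟩) (MvPolynomial.eval s p) ≤ ε := h2.trans hdist.le
        rw [Real.dist_eq] at h3
        exact h3
      rw [Real.norm_eq_abs, abs_mul]
      exact mul_le_mul (hC s) h1 (abs_nonneg _) hC0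
    have hnorm := norm_setIntegral_le_of_norm_le_const (μ := volume)
      (by rw [volume_unitCube]; exact ENNReal.one_lt_top)
      hb
    rw [Measure.real, volume_unitCube] at hnorm
    simpa using hnorm
  have hle : |∫ s in unitCube d, f s * φ s| ≤ 0 := by
    apply le_of_forall_pos_le_add
    intro ε hε
    have hεc : 0 < ε / (C + 1) := by positivity
    calc |∫ s in unitCube d, f s * φ s| ≤ C * (ε / (C + 1)) := habs _ hεc
      _ ≤ ε := by
          rw [div_eq_inv_mul, ← mul_assoc]
          have h1 : C * (C + 1)⁻¹ ≤ 1 := by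
            rw [mul_inv_le_iff₀ (by linarith)]
            linarith
          nlinarith [h1]
      _ = 0 + ε := (zero_add ε).symm
  have := abs_nonneg (∫ s in unitCube d, f s * φ s)
  have habs0 : |∫ s in unitCube d, f s * φ s| = 0 := le_antisymm hle this
  exact abs_eq_zero.mp habs0

lemma ae_zero_of_moments {d : ℕ} (f : (Fin d → ℝ) → ℝ) (hf : Measurable f)
    (C : ℝ) (hC : ∀ s, |f s| ≤ C)
    (hmom : ∀ c : Fin d → ℕ, ∫ s in unitCube d, f s * ∏ j, (s j) ^ (c j) = 0) :
    ∀ᵐ s ∂(volume.restrict (unitCube d)), f s = 0 := by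
  set μ := volume.restrict (unitCube d) with hμ
  haveI : IsFiniteMeasure μ := by
    constructor
    rw [hμ, Measure.restrict_apply_univ, volume_unitCube]
    exact ENNReal.one_lt_top
  have hint : Integrable f μ := by
    refine Integrable.mono' (integrable_const C) hf.aestronglyMeasurable.restrict ?_
    exact Filter.Eventually.of_forall fun s => by simpa using hC s
  apply ae_eq_zero_of_integral_contDiff_smul_eq_zero hint.locallyIntegrable
  intro g hg hgsupp
  have : ∫ s, g s • f s ∂μ = ∫ s in unitCube d, f s * g s := by
    rw [hμ]
    apply integral_congr_ae
    apply Filter.Eventually.of_forall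
    intro s
    simp [smul_eq_mul, mul_comm]
  rw [this]
  exact integral_continuous_zero f hf C hC hmom g hg.continuous

-- previously proved
lemma msMonomial_eval {d n N : ℕ} (z : (Fin d → ℝ) → Fin n → ℝ) (Q : Fin d → Fin n)
    (π : Fin d → Equiv.Perm (Fin (N + 1))) :
    msMonomial (parametrize z)
      (fun i : Fin (N + 1) => if i = 0 then (fun j => Fin.natAdd d (Q j))
        else (fun j : Fin d => Fin.castAdd n j)) π
      = ∫ t in intDomain π (fun _ => 0) (fun _ => 1), jacobianMinor z Q (t 0) := by
  unfold msMonomial msMonomialOn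
  have hprod : ∀ t : Fin (N + 1) → Fin d → ℝ,
      (∏ i, jacobianMinor (parametrize z)
        ((fun i : Fin (N + 1) => if i = 0 then (fun j => Fin.natAdd d (Q j))
          else (fun j : Fin d => Fin.castAdd n j)) i) (t i))
        = jacobianMinor z Q (t 0) := by
    intro t
    rw [Finset.prod_eq_single 0]
    · simp only [if_pos rfl]
      exact congrFun (jacobianMinor_parametrize_natAdd z Q) (t 0)
    · intro i _ hi
      simp only [if_neg hi]
      exact jacobianMinor_parametrize_castAdd z (t i)
    · intro habs
      exact absurd (Finset.mem_univ 0) habs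
  simp_rw [hprod]


/-- injectivity of the parametrized mapping space signature up to
Jacobian equivalence.  Here `W ⊆ O_{d,d+n}` consists of `U` (selecting the first `d`
coordinates) together with the strictly increasing maps landing in the last `n`
coordinates. -/
theorem stmt2 (d n : ℕ) (hd : 1 ≤ d) (hn : d ≤ n)
    (x y : (Fin d → ℝ) → Fin n → ℝ) (hx : IsLipMap x) (hy : IsLipMap y)
    (h : ∀ m : ℕ, 1 ≤ m → ∀ P : Fin m → Fin d → Fin (d + n),
      (∀ i, P i = (fun j => Fin.castAdd n j) ∨
        ∃ Q : Fin d → Fin n, StrictMono Q ∧ P i = fun j => Fin.natAdd d (Q j)) →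
      ∀ π : Fin d → Equiv.Perm (Fin m),
        msMonomial (parametrize x) P π = msMonomial (parametrize y) P π) :
    ∀ Q : Fin d → Fin n, StrictMono Q →
      ∀ᵐ s ∂(volume.restrict (unitCube d)),
        jacobianMinor x Q s = jacobianMinor y Q s := by
  intro Q hQ
  obtain ⟨Lx, hLx⟩ := hx
  obtain ⟨Ly, hLy⟩ := hy
  set g₁ := jacobianMinor x Q with hg₁def
  set g₂ := jacobianMinor y Q with hg₂def
  have hmeas₁ : Measurable g₁ := measurable_jacobianMinor x Q
  have hmeas₂ : Measurable g₂ := measurable_jacobianMinor y Q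
  set C : ℝ := max ((Nat.factorial d) * (|Lx| * Real.sqrt d) ^ d)
    ((Nat.factorial d) * (|Ly| * Real.sqrt d) ^ d) with hCdef
  have hC₁ : ∀ s, |g₁ s| ≤ C :=
    fun s => le_trans (abs_jacobianMinor_le hLx Q s) (le_max_left _ _)
  have hC₂ : ∀ s, |g₂ s| ≤ C :=
    fun s => le_trans (abs_jacobianMinor_le hLy Q s) (le_max_right _ _)
  have hbern : ∀ (N : ℕ) (k : Fin d → ℕ), (∀ j, k j < N + 1) →
      ∫ s in unitCube d, g₁ s * ∏ j, (s j) ^ (k j) * (1 - s j) ^ (N - k j)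
        = ∫ s in unitCube d, g₂ s * ∏ j, (s j) ^ (k j) * (1 - s j) ^ (N - k j) := by
    intro N k hk
    apply moments_eq N k hk g₁ g₂ hmeas₁ hmeas₂ C hC₁ hC₂
    intro π hπ
    have hPcond : ∀ i : Fin (N + 1),
        ((fun i : Fin (N + 1) => if i = 0 then (fun j => Fin.natAdd d (Q j))
          else (fun j : Fin d => Fin.castAdd n j)) i) = (fun j => Fin.castAdd n j) ∨
        ∃ Q' : Fin d → Fin n, StrictMono Q' ∧
          ((fun i : Fin (N + 1) => if i = 0 then (fun j => Fin.natAdd d (Q j))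
            else (fun j : Fin d => Fin.castAdd n j)) i) = fun j => Fin.natAdd d (Q' j) := by
      intro i
      by_cases hi : i = 0
      · right
        exact ⟨Q, hQ, by simp only [if_pos hi]⟩
      · left
        simp only [if_neg hi]
    have hm := h (N + 1) (by omega)
      (fun i : Fin (N + 1) => if i = 0 then (fun j => Fin.natAdd d (Q j))
        else (fun j : Fin d => Fin.castAdd n j)) hPcond π
    rw [msMonomial_eval x Q π, msMonomial_eval y Q π] at hm
    exact hm
  have hmono := mono_moments_eq g₁ g₂ hmeas₁ hmeas₂ C hC₁ hC₂ hbern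
  set f : (Fin d → ℝ) → ℝ := fun s => g₁ s - g₂ s with hfdef
  have hmom : ∀ c : Fin d → ℕ, ∫ s in unitCube d, f s * ∏ j, (s j) ^ (c j) = 0 := by
    intro c
    have hcont : Continuous fun s : Fin d → ℝ => ∏ j, (s j) ^ (c j) :=
      continuous_finset_prod _ fun j _ => (continuous_apply j).pow _
    have h1 : ∫ s in unitCube d, f s * ∏ j, (s j) ^ (c j)
        = (∫ s in unitCube d, g₁ s * ∏ j, (s j) ^ (c j))
          - ∫ s in unitCube d, g₂ s * ∏ j, (s j) ^ (c j) := by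
      rw [← integral_sub (integrableOn_cube_mul g₁ hmeas₁ C hC₁ _ hcont)
        (integrableOn_cube_mul g₂ hmeas₂ C hC₂ _ hcont)]
      apply setIntegral_congr_fun (measurableSet_unitCube d)
      intro s _
      dsimp only
      ring
    rw [h1, hmono c, sub_self]
  have hfC : ∀ s, |f s| ≤ C + C := by
    intro s
    calc |f s| ≤ |g₁ s| + |g₂ s| := abs_sub _ _
      _ ≤ C + C := add_le_add (hC₁ s) (hC₂ s)
  have hconc := ae_zero_of_moments f (hmeas₁.sub hmeas₂) (C + C) hfC hmom
  filter_upwards [hconc] with s hs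
  exact sub_eq_zero.mp hs

end
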